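/- Let γ > 0 and let (M_j)_{j∈N} be a sequence in Ŵ ∩ S with λ_1(M_0) > 0 together with unit vectors v_j ∈ R^d such that M_j v_j = λ_1(M_j) v_j and M_{j+1} = P_Ŵ(M_j + γ·v_j ⊗ v_j) / ‖P_Ŵ(M_j + γ·v_j ⊗ v_j)‖_F for all j. Then the sequence (λ_1(M_j))_{j∈N} converges to a limit λ_∞ ∈ [0,1], and ‖M_{j+1} − M_j‖_F → 0 as j → ∞. -/

import Mathlib

open Matrix

noncomputable def vnorm {d : ℕ} (v : Fin d → ℝ) : ℝ := Real.sqrt (∑ i, v i ^ 2)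

noncomputable def frobInner {d : ℕ} (M N : Matrix (Fin d) (Fin d) ℝ) : ℝ :=
  ∑ i, ∑ j, M i j * N i j

noncomputable def frobNorm {d : ℕ} (M : Matrix (Fin d) (Fin d) ℝ) : ℝ :=
  Real.sqrt (frobInner M M)

def IsOrthProjOn {d : ℕ} (V : Submodule ℝ (Matrix (Fin d) (Fin d) ℝ))
    (P : Matrix (Fin d) (Fin d) ℝ →ₗ[ℝ] Matrix (Fin d) (Fin d) ℝ) : Prop :=
  (∀ X, P X ∈ V) ∧ (∀ X ∈ V, P X = X) ∧ ∀ X Y, frobInner (P X) Y = frobInner X (P Y)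

noncomputable def hsNorm {d : ℕ}
    (T : Matrix (Fin d) (Fin d) ℝ →ₗ[ℝ] Matrix (Fin d) (Fin d) ℝ) : ℝ :=
  Real.sqrt (∑ i, ∑ j,
    frobInner (T (Matrix.single i j 1)) (T (Matrix.single i j 1)))

noncomputable def specNorm {d : ℕ} (M : Matrix (Fin d) (Fin d) ℝ) : ℝ :=
  sSup {r : ℝ | ∃ v : Fin d → ℝ, (∑ i, v i ^ 2) = 1 ∧ r = |dotProduct v (M.mulVec v)|}

noncomputable def lamTop {d : ℕ} (M : Matrix (Fin d) (Fin d) ℝ) : ℝ :=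
  sSup {r : ℝ | ∃ v : Fin d → ℝ, (∑ i, v i ^ 2) = 1 ∧ r = dotProduct v (M.mulVec v)}

def IsLocMaxSpec {d : ℕ} (V : Submodule ℝ (Matrix (Fin d) (Fin d) ℝ))
    (M : Matrix (Fin d) (Fin d) ℝ) : Prop :=
  M ∈ V ∧ frobNorm M ≤ 1 ∧
    ∃ ε > 0, ∀ X ∈ V, frobNorm X ≤ 1 → frobNorm (X - M) < ε → specNorm X ≤ specNorm M

section Helpers

open Matrix Finset

variable {d : ℕ}

private lemma frobInner_comm (A B : Matrix (Fin d) (Fin d) ℝ) :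
    frobInner A B = frobInner B A := by
  unfold frobInner
  exact Finset.sum_congr rfl fun i _ => Finset.sum_congr rfl fun j _ => mul_comm _ _

private lemma frobInner_self_nonneg (A : Matrix (Fin d) (Fin d) ℝ) : 0 ≤ frobInner A A :=
  Finset.sum_nonneg fun i _ => Finset.sum_nonneg fun j _ => mul_self_nonneg _

private lemma frobNorm_sq (A : Matrix (Fin d) (Fin d) ℝ) : frobNorm A ^ 2 = frobInner A A :=
  Real.sq_sqrt (frobInner_self_nonneg A)

private lemma frobInner_cs (A B : Matrix (Fin d) (Fin d) ℝ) :
    frobInner A B ≤ frobNorm A * frobNorm B := by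
  have hA : frobInner A A = ∑ p : Fin d × Fin d, A p.1 p.2 ^ 2 := by
    rw [Fintype.sum_prod_type]; unfold frobInner
    exact Finset.sum_congr rfl fun i _ => Finset.sum_congr rfl fun j _ => (sq _).symm
  have hB : frobInner B B = ∑ p : Fin d × Fin d, B p.1 p.2 ^ 2 := by
    rw [Fintype.sum_prod_type]; unfold frobInner
    exact Finset.sum_congr rfl fun i _ => Finset.sum_congr rfl fun j _ => (sq _).symm
  have hAB : frobInner A B = ∑ p : Fin d × Fin d, A p.1 p.2 * B p.1 p.2 := by
    rw [Fintype.sum_prod_type]; rfl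
  have h2 : (frobInner A B) ^ 2 ≤ frobInner A A * frobInner B B := by
    rw [hA, hB, hAB]
    exact Finset.sum_mul_sq_le_sq_mul_sq _ _ _
  calc frobInner A B ≤ |frobInner A B| := le_abs_self _
    _ = Real.sqrt ((frobInner A B) ^ 2) := (Real.sqrt_sq_eq_abs _).symm
    _ ≤ Real.sqrt (frobInner A A * frobInner B B) := Real.sqrt_le_sqrt h2
    _ = frobNorm A * frobNorm B := by
        rw [frobNorm, frobNorm, Real.sqrt_mul (frobInner_self_nonneg A)]

private lemma frobInner_add_left (A B C : Matrix (Fin d) (Fin d) ℝ) :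
    frobInner (A + B) C = frobInner A C + frobInner B C := by
  simp [frobInner, Matrix.add_apply, add_mul, Finset.sum_add_distrib]

private lemma frobInner_smul_left (c : ℝ) (A B : Matrix (Fin d) (Fin d) ℝ) :
    frobInner (c • A) B = c * frobInner A B := by
  simp [frobInner, Matrix.smul_apply, smul_eq_mul, mul_assoc, Finset.mul_sum]

private lemma frobInner_add_right (A B C : Matrix (Fin d) (Fin d) ℝ) :
    frobInner A (B + C) = frobInner A B + frobInner A C := by
  rw [frobInner_comm, frobInner_add_left, frobInner_comm B A, frobInner_comm C A]

private lemma frobInner_smul_right (c : ℝ) (A B : Matrix (Fin d) (Fin d) ℝ) :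
    frobInner A (c • B) = c * frobInner A B := by
  rw [frobInner_comm, frobInner_smul_left, frobInner_comm B A]

private lemma frobInner_sub_sub (A B : Matrix (Fin d) (Fin d) ℝ) :
    frobInner (A - B) (A - B)
      = frobInner A A - 2 * frobInner A B + frobInner B B := by
  have h : ∀ i j, (A i j - B i j) * (A i j - B i j)
      = A i j * A i j - 2 * (A i j * B i j) + B i j * B i j := by intros; ring
  simp only [frobInner, Matrix.sub_apply, h, Finset.sum_add_distrib,
    Finset.sum_sub_distrib, Finset.mul_sum]

private lemma quad_eq_frob (w : Fin d → ℝ) (A : Matrix (Fin d) (Fin d) ℝ) :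
    dotProduct w (A.mulVec w) = frobInner (vecMulVec w w) A := by
  simp only [frobInner, dotProduct, Matrix.mulVec, Matrix.vecMulVec_apply]
  refine Finset.sum_congr rfl fun i _ => ?_
  rw [Finset.mul_sum]
  exact Finset.sum_congr rfl fun j _ => by ring

private lemma frobNorm_vvt (w : Fin d → ℝ) (hw : (∑ i, w i ^ 2) = 1) :
    frobNorm (vecMulVec w w) = 1 := by
  have : frobInner (vecMulVec w w) (vecMulVec w w) = 1 := by
    have : ∀ i j, vecMulVec w w i j * vecMulVec w w i j = w i ^ 2 * w j ^ 2 := by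
      intro i j; simp [Matrix.vecMulVec_apply]; ring
    simp only [frobInner, this, ← Finset.mul_sum, ← Finset.sum_mul, hw, one_mul]
  rw [frobNorm, this, Real.sqrt_one]

private lemma quad_le_frobNorm (A : Matrix (Fin d) (Fin d) ℝ) (w : Fin d → ℝ)
    (hw : (∑ i, w i ^ 2) = 1) : dotProduct w (A.mulVec w) ≤ frobNorm A := by
  rw [quad_eq_frob]
  calc frobInner (vecMulVec w w) A ≤ frobNorm (vecMulVec w w) * frobNorm A := frobInner_cs _ _
    _ = frobNorm A := by rw [frobNorm_vvt w hw, one_mul]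

private lemma bddAbove_quadset (A : Matrix (Fin d) (Fin d) ℝ) :
    BddAbove {r : ℝ | ∃ w : Fin d → ℝ, (∑ i, w i ^ 2) = 1 ∧ r = dotProduct w (A.mulVec w)} :=
  ⟨frobNorm A, by rintro r ⟨w, hw, rfl⟩; exact quad_le_frobNorm A w hw⟩

private lemma le_lamTop (A : Matrix (Fin d) (Fin d) ℝ) (w : Fin d → ℝ)
    (hw : (∑ i, w i ^ 2) = 1) : dotProduct w (A.mulVec w) ≤ lamTop A :=
  le_csSup (bddAbove_quadset A) ⟨w, hw, rfl⟩

private lemma lamTop_le_frobNorm (A : Matrix (Fin d) (Fin d) ℝ) (w : Fin d → ℝ)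
    (hw : (∑ i, w i ^ 2) = 1) : lamTop A ≤ frobNorm A :=
  csSup_le ⟨_, w, hw, rfl⟩ (by rintro r ⟨u, hu, rfl⟩; exact quad_le_frobNorm A u hu)

end Helpers

/-- convergence of the eigenvalues and vanishing increments of the projected
gradient ascent iteration. -/
theorem iteration_convergence
    (d : ℕ) (γ : ℝ) (hγ : 0 < γ)
    (Wh : Submodule ℝ (Matrix (Fin d) (Fin d) ℝ))
    (hWhsym : ∀ X ∈ Wh, X.IsSymm)
    (PWh : Matrix (Fin d) (Fin d) ℝ →ₗ[ℝ] Matrix (Fin d) (Fin d) ℝ)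
    (hPWh : IsOrthProjOn Wh PWh)
    (M : ℕ → Matrix (Fin d) (Fin d) ℝ) (v : ℕ → Fin d → ℝ)
    (hmem : ∀ j, M j ∈ Wh) (hS : ∀ j, frobNorm (M j) = 1)
    (h0 : 0 < lamTop (M 0))
    (hv : ∀ j, ∑ i, v j i ^ 2 = 1)
    (heig : ∀ j, (M j).mulVec (v j) = lamTop (M j) • v j)
    (hiter : ∀ j, M (j + 1) =
      (frobNorm (PWh (M j + γ • vecMulVec (v j) (v j))))⁻¹ •
        PWh (M j + γ • vecMulVec (v j) (v j))) :
    (∃ L ∈ Set.Icc (0 : ℝ) 1,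
        Filter.Tendsto (fun j => lamTop (M j)) Filter.atTop (nhds L)) ∧
      Filter.Tendsto (fun j => frobNorm (M (j + 1) - M j)) Filter.atTop (nhds 0) := by
  obtain ⟨hP1, hP2, hP3⟩ := hPWh
  set lam : ℕ → ℝ := fun j => lamTop (M j) with hlamdef
  -- quadratic form value at eigenvector
  have hQ : ∀ j, dotProduct (v j) ((M j).mulVec (v j)) = lam j := by
    intro j
    rw [heig j]
    have h1 : dotProduct (v j) (lam j • v j) = lam j * ∑ i, v j i ^ 2 := by
      simp only [dotProduct, Pi.smul_apply, smul_eq_mul, Finset.mul_sum]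
      exact Finset.sum_congr rfl fun i _ => by ring
    rw [h1, hv j, mul_one]
  have hMM : ∀ j, frobInner (M j) (M j) = 1 := by
    intro j
    have h := frobNorm_sq (M j)
    rw [hS j] at h
    simpa using h.symm
  have hle1 : ∀ j, lam j ≤ 1 := fun j =>
    (lamTop_le_frobNorm (M j) (v j) (hv j)).trans_eq (hS j)
  -- main one-step inequality
  have hstep : ∀ j, 0 < lam j →
      γ * lam j + (1 - frobInner (M (j + 1)) (M j)) ≤ γ * lam (j + 1) ∧
        frobInner (M (j + 1)) (M j) ≤ 1 := by
    intro j hpos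
    set X : Matrix (Fin d) (Fin d) ℝ := M j + γ • vecMulVec (v j) (v j) with hX
    set N : Matrix (Fin d) (Fin d) ℝ := PWh X with hN
    set n : ℝ := frobNorm N with hn
    have hNmem : N ∈ Wh := hP1 X
    have hNM : frobInner N (M j) = 1 + γ * lam j := by
      rw [hN, hP3 X (M j), hP2 _ (hmem j), hX, frobInner_add_left, frobInner_smul_left,
        hMM j, ← quad_eq_frob, hQ j]
    have hnge : 1 + γ * lam j ≤ n := by
      have h := frobInner_cs N (M j)
      rw [hNM, hS j, mul_one] at h
      exact h
    have hnpos : 0 < n := lt_of_lt_of_le (by nlinarith) hnge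
    have hNX : frobInner N X = n ^ 2 := by
      have h2 : frobInner (PWh X) N = frobInner X (PWh N) := hP3 X N
      rw [hP2 N hNmem] at h2
      rw [frobInner_comm N X, ← h2, ← hN, frobNorm_sq]
    have hit := hiter j
    rw [← hX, ← hN, ← hn] at hit
    have hM1X : frobInner (M (j + 1)) X = n := by
      rw [hit, frobInner_smul_left, hNX, sq]
      field_simp
    have hsplit : frobInner (M (j + 1)) X
        = frobInner (M (j + 1)) (M j) + γ * dotProduct (v j) ((M (j + 1)).mulVec (v j)) := by
      rw [hX, frobInner_add_right, frobInner_smul_right, quad_eq_frob,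
        frobInner_comm (vecMulVec (v j) (v j))]
    have hq1 : dotProduct (v j) ((M (j + 1)).mulVec (v j)) ≤ lam (j + 1) :=
      le_lamTop _ _ (hv j)
    have hc1 : frobInner (M (j + 1)) (M j) ≤ 1 := by
      have h := frobInner_cs (M (j + 1)) (M j)
      rw [hS j, hS (j + 1), mul_one] at h
      exact h
    refine ⟨?_, hc1⟩
    have hγq : γ * dotProduct (v j) ((M (j + 1)).mulVec (v j)) ≤ γ * lam (j + 1) :=
      mul_le_mul_of_nonneg_left hq1 hγ.le
    have := hM1X
    rw [hsplit] at this
    linarith [hnge, this]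
  have hpos : ∀ j, 0 < lam j := by
    intro j
    induction j with
    | zero => exact h0
    | succ k ih =>
      obtain ⟨hk, hck⟩ := hstep k ih
      nlinarith
  have hmono : Monotone lam := by
    refine monotone_nat_of_le_succ fun j => ?_
    obtain ⟨hk, hck⟩ := hstep j (hpos j)
    nlinarith
  have hbdd : BddAbove (Set.range lam) := ⟨1, by rintro r ⟨j, rfl⟩; exact hle1 j⟩
  have htend : Filter.Tendsto lam Filter.atTop (nhds (⨆ j, lam j)) :=
    tendsto_atTop_ciSup hmono hbdd
  set L : ℝ := ⨆ j, lam j with hLdef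
  have hL0 : 0 ≤ L := le_trans (hpos 0).le (le_ciSup hbdd 0)
  have hL1 : L ≤ 1 := ciSup_le hle1
  refine ⟨⟨L, ⟨hL0, hL1⟩, htend⟩, ?_⟩
  -- second part
  have hdiff : ∀ j, frobNorm (M (j + 1) - M j)
      = Real.sqrt (2 - 2 * frobInner (M (j + 1)) (M j)) := by
    intro j
    rw [frobNorm, frobInner_sub_sub, hMM j, hMM (j + 1)]
    congr 1
    ring
  have hto0 : Filter.Tendsto (fun j => 2 - 2 * frobInner (M (j + 1)) (M j))
      Filter.atTop (nhds 0) := by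
    have hub : ∀ j, 2 - 2 * frobInner (M (j + 1)) (M j)
        ≤ 2 * γ * (lam (j + 1) - lam j) := by
      intro j
      obtain ⟨hk, _⟩ := hstep j (hpos j)
      nlinarith
    have hlb : ∀ j, 0 ≤ 2 - 2 * frobInner (M (j + 1)) (M j) := by
      intro j
      obtain ⟨_, hck⟩ := hstep j (hpos j)
      linarith
    have h1 : Filter.Tendsto (fun j => lam (j + 1)) Filter.atTop (nhds L) :=
      htend.comp (Filter.tendsto_add_atTop_nat 1)
    have h2 : Filter.Tendsto (fun j => 2 * γ * (lam (j + 1) - lam j))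
        Filter.atTop (nhds 0) := by
      have := (h1.sub htend).const_mul (2 * γ)
      simpa using this
    exact squeeze_zero hlb hub h2
  have hs : Filter.Tendsto (fun j => Real.sqrt (2 - 2 * frobInner (M (j + 1)) (M j)))
      Filter.atTop (nhds 0) := by
    have := (Real.continuous_sqrt.tendsto 0).comp hto0
    rw [Real.sqrt_zero] at this
    exact this
  exact hs.congr fun j => (hdiff j).symm
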